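/- Let m > 1, p > 0, a > 0 and k ≥ 1 be real numbers. Then lim_{z→∞} z^{a+k} ∫_0^1 λ^{a−1} (λ/(m−λ))^k exp(−(λ/(m−λ))·p·z) dλ = m^a · Γ(a+k) · p^{−(a+k)}, where Γ denotes the Gamma function. -/

import Mathlib

open MeasureTheory Filter Topology Real

private lemma key1 (m p a k : ℝ) (hm : 1 < m) (hp : 0 < p) (z : ℝ) (hz : 0 < z) :
    z ^ (a + k) * ∫ l in Set.Ioo (0:ℝ) 1,
        l ^ (a - 1) * (l / (m - l)) ^ k * Real.exp (-(l / (m - l)) * p * z)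
    = m ^ a * p ^ (-(a + k)) *
      ∫ s in Set.Ioo (0:ℝ) (p * z / (m - 1)),
        s ^ (a + k - 1) * Real.exp (-s) * (1 + s / (p * z)) ^ (-(a + 1)) := by
  have hm0 : (0:ℝ) < m := by linarith
  have hm1 : (0:ℝ) < m - 1 := by linarith
  set c := p * z with hc_def
  have hc : 0 < c := mul_pos hp hz
  set T := c / (m - 1) with hT_def
  have hT : 0 < T := div_pos hc hm1
  set ψ : ℝ → ℝ := fun s => m * s / (c + s) with hψ_def
  have himg : ψ '' Set.Ioo 0 T = Set.Ioo (0:ℝ) 1 := by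
    ext l
    constructor
    · rintro ⟨s, ⟨hs0, hsT⟩, rfl⟩
      have hcs : 0 < c + s := by linarith
      refine ⟨by positivity, ?_⟩
      rw [div_lt_one hcs]
      have := (lt_div_iff₀ hm1).mp hsT
      nlinarith
    · rintro ⟨hl0, hl1⟩
      have hml : 0 < m - l := by linarith
      refine ⟨c * l / (m - l), ⟨by positivity, ?_⟩, ?_⟩
      · rw [hT_def, div_lt_div_iff₀ hml hm1]
        nlinarith [mul_pos (mul_pos hc hm0) (show (0:ℝ) < 1 - l by linarith)]
      · have hden : c + c * l / (m - l) = c * m / (m - l) := by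
          field_simp; ring
        simp only [hψ_def, hden]
        field_simp
  have hderiv : ∀ s ∈ Set.Ioo (0:ℝ) T,
      HasDerivWithinAt ψ (m * c / (c + s) ^ 2) (Set.Ioo 0 T) s := by
    intro s hs
    have hcs : (0:ℝ) < c + s := by linarith [hs.1]
    have h1 : HasDerivAt (fun s : ℝ => m * s) m s := by
      simpa using (hasDerivAt_id s).const_mul m
    have h2 : HasDerivAt (fun s : ℝ => c + s) 1 s := by
      simpa using (hasDerivAt_id s).const_add c
    have h3 := h1.div h2 (ne_of_gt hcs)
    have heq : (m * (c + s) - m * s * 1) / (c + s) ^ 2 = m * c / (c + s) ^ 2 := by ring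
    rw [heq] at h3
    exact h3.hasDerivWithinAt
  have hinj : Set.InjOn ψ (Set.Ioo 0 T) := by
    intro s1 h1 s2 h2 heq
    have hcs1 : (0:ℝ) < c + s1 := by linarith [h1.1]
    have hcs2 : (0:ℝ) < c + s2 := by linarith [h2.1]
    have h5 := (div_eq_div_iff (ne_of_gt hcs1) (ne_of_gt hcs2)).mp heq
    have h3 : m * c * (s1 - s2) = 0 := by linear_combination h5
    have h4 : m * c ≠ 0 := by positivity
    rcases mul_eq_zero.mp h3 with h | h
    · exact absurd h h4
    · linarith
  rw [← himg, integral_image_eq_integral_abs_deriv_smul measurableSet_Ioo hderiv hinj,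
    ← MeasureTheory.integral_const_mul, ← MeasureTheory.integral_const_mul]
  refine setIntegral_congr_fun measurableSet_Ioo ?_
  intro s hs
  obtain ⟨hs0, hsT⟩ := hs
  have hcs : (0:ℝ) < c + s := by linarith
  have hmψ : m - ψ s = m * c / (c + s) := by
    simp only [hψ_def]; field_simp; ring
  have hratio : ψ s / (m - ψ s) = s / c := by
    rw [hmψ]; simp only [hψ_def]
    rw [div_div_div_eq]
    rw [div_eq_div_iff (by positivity) (by positivity)]
    ring
  have hexp : -(ψ s / (m - ψ s)) * p * z = -s := by
    rw [hratio, hc_def]; field_simp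
  have habs : |m * c / (c + s) ^ 2| = m * c / (c + s) ^ 2 := abs_of_pos (by positivity)
  have h1sc : 1 + s / c = (c + s) / c := by field_simp
  simp only [smul_eq_mul, habs, hexp, hratio, h1sc]
  simp only [hψ_def]
  refine Real.log_injOn_pos (Set.mem_Ioi.2 (by positivity)) (Set.mem_Ioi.2 (by positivity)) ?_
  have hlc : Real.log c = Real.log p + Real.log z := by
    rw [hc_def, Real.log_mul hp.ne' hz.ne']
  simp (disch := positivity) only [Real.log_mul, Real.log_div, Real.log_rpow, Real.log_exp,
    Real.log_pow]
  rw [hlc]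
  push_cast
  field_simp
  ring

private lemma key2 (m p a k : ℝ) (hm : 1 < m) (hp : 0 < p) (ha : 0 < a) (hk : 1 ≤ k) :
    Tendsto (fun z : ℝ => ∫ s in Set.Ioo (0:ℝ) (p * z / (m - 1)),
        s ^ (a + k - 1) * Real.exp (-s) * (1 + s / (p * z)) ^ (-(a + 1)))
      atTop (𝓝 (Real.Gamma (a + k))) := by
  have hm1 : (0:ℝ) < m - 1 := by linarith
  have hak : 0 < a + k := by linarith
  set g : ℝ → ℝ → ℝ := fun z s =>
      s ^ (a + k - 1) * Real.exp (-s) * (1 + s / (p * z)) ^ (-(a + 1)) with hg_def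
  set F : ℝ → ℝ → ℝ := fun z => (Set.Iio (p * z / (m - 1))).indicator (g z) with hF_def
  have hrepr : ∀ z : ℝ, (∫ s in Set.Ioo (0:ℝ) (p * z / (m - 1)), g z s)
      = ∫ s in Set.Ioi (0:ℝ), F z s := by
    intro z
    rw [hF_def]
    rw [integral_indicator measurableSet_Iio, Measure.restrict_restrict measurableSet_Iio,
      Set.Iio_inter_Ioi]
  have hDC : Tendsto (fun z : ℝ => ∫ s in Set.Ioi (0:ℝ), F z s) atTop
      (𝓝 (∫ s in Set.Ioi (0:ℝ), Real.exp (-s) * s ^ (a + k - 1))) := by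
    apply tendsto_integral_filter_of_dominated_convergence
      (fun s => Real.exp (-s) * s ^ (a + k - 1))
    · filter_upwards with z
      apply AEStronglyMeasurable.indicator _ measurableSet_Iio
      apply Measurable.aestronglyMeasurable
      fun_prop
    · filter_upwards [eventually_gt_atTop (0:ℝ)] with z hz
      filter_upwards [ae_restrict_mem measurableSet_Ioi] with s hs
      have hs0 : (0:ℝ) < s := hs
      by_cases hsT : s ∈ Set.Iio (p * z / (m - 1))
      · rw [hF_def]
        simp only [Set.indicator_of_mem hsT]
        have hpz : 0 < p * z := mul_pos hp hz
        have h1 : (1:ℝ) ≤ 1 + s / (p * z) := by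
          have : 0 ≤ s / (p * z) := by positivity
          linarith
        have h2 : (1 + s / (p * z)) ^ (-(a + 1)) ≤ 1 :=
          Real.rpow_le_one_of_one_le_of_nonpos h1 (by linarith)
        have h3 : 0 < (1 + s / (p * z)) ^ (-(a + 1)) := by positivity
        rw [Real.norm_eq_abs, abs_of_pos (by positivity)]
        calc s ^ (a + k - 1) * Real.exp (-s) * (1 + s / (p * z)) ^ (-(a + 1))
            ≤ s ^ (a + k - 1) * Real.exp (-s) * 1 := by
              apply mul_le_mul_of_nonneg_left h2 (by positivity)
          _ = Real.exp (-s) * s ^ (a + k - 1) := by ring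
      · rw [hF_def]
        simp only [Set.indicator_of_notMem hsT, norm_zero]
        positivity
    · exact Real.GammaIntegral_convergent hak
    · filter_upwards [ae_restrict_mem measurableSet_Ioi] with s hs
      have hs0 : (0:ℝ) < s := hs
      have hev : ∀ᶠ z : ℝ in atTop, F z s = g z s := by
        filter_upwards [eventually_gt_atTop (s * (m - 1) / p)] with z hz
        have hsT : s ∈ Set.Iio (p * z / (m - 1)) := by
          simp only [Set.mem_Iio]
          rw [lt_div_iff₀ hm1]
          rw [div_lt_iff₀ hp] at hz
          linarith
        rw [hF_def]
        simp only [Set.indicator_of_mem hsT]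
      have h0 : Tendsto (fun z : ℝ => s / (p * z)) atTop (𝓝 0) := by
        apply Tendsto.div_atTop (tendsto_const_nhds)
        exact (tendsto_id.const_mul_atTop hp)
      have h1 : Tendsto (fun z : ℝ => 1 + s / (p * z)) atTop (𝓝 1) := by
        simpa using h0.const_add 1
      have h2 : Tendsto (fun z : ℝ => (1 + s / (p * z)) ^ (-(a + 1))) atTop (𝓝 1) := by
        have hcont : ContinuousAt (fun x : ℝ => x ^ (-(a + 1))) 1 :=
          Real.continuousAt_rpow_const 1 _ (Or.inl one_ne_zero)
        have := hcont.tendsto.comp h1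
        simpa [Function.comp_def] using this
      have h3 : Tendsto (fun z : ℝ => g z s) atTop (𝓝 (Real.exp (-s) * s ^ (a + k - 1))) := by
        have := (tendsto_const_nhds (x := s ^ (a + k - 1) * Real.exp (-s))).mul h2
        simp only [mul_one] at this
        convert this using 2
        ring
      exact h3.congr' (hev.mono fun z hz => hz.symm)
  have hGamma : (∫ s in Set.Ioi (0:ℝ), Real.exp (-s) * s ^ (a + k - 1))
      = Real.Gamma (a + k) := (Real.Gamma_eq_integral hak).symm
  rw [hGamma] at hDC
  exact hDC.congr' (by filter_upwards with z using (hrepr z).symm)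

theorem tendsto_zpow_mul_integral_gamma
    (m p a k : ℝ) (hm : 1 < m) (hp : 0 < p) (ha : 0 < a) (hk : 1 ≤ k) :
    Tendsto
      (fun z : ℝ => z ^ (a + k) *
        ∫ l in Set.Ioo (0:ℝ) 1,
          l ^ (a - 1) * (l / (m - l)) ^ k * Real.exp (-(l / (m - l)) * p * z))
      atTop
      (𝓝 (m ^ a * Real.Gamma (a + k) * p ^ (-(a + k)))) := by
  have h := (key2 m p a k hm hp ha hk).const_mul (m ^ a * p ^ (-(a + k)))
  rw [show m ^ a * Real.Gamma (a + k) * p ^ (-(a + k))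
      = m ^ a * p ^ (-(a + k)) * Real.Gamma (a + k) by ring]
  refine Tendsto.congr' ?_ h
  filter_upwards [eventually_gt_atTop (0:ℝ)] with z hz
  exact (key1 m p a k hm hp z hz).symm
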